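/- Let G be a monoid and let V, W be completely reducible finite-dimensional complex representations of G. If the characters agree, i.e., tr_V(g) = tr_W(g) for all g ∈ G, then V and W are isomorphic as G-modules. -/

import Mathlib

open LinearMap Module DirectSum

section Density

variable {A : Type*} [Ring A]

private lemma simple_isSemisimple (M : Type*) [AddCommGroup M] [Module A M]
    [IsSimpleModule A M] : IsSemisimpleModule A M := by
  apply IsSemisimpleModule.of_sSup_simples_eq_top
  rw [eq_top_iff]
  refine le_sSup ?_
  exact IsSimpleModule.congr (Submodule.topEquiv (R := A) (M := M))

private lemma pi_isSemisimple {ι : Type*} [Fintype ι] (T : ι → Type*)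
    [∀ i, AddCommGroup (T i)] [∀ i, Module A (T i)] [∀ i, IsSemisimpleModule A (T i)] :
    IsSemisimpleModule A (∀ i, T i) := by
  classical
  apply isSemisimpleModule_of_isSemisimpleModule_submodule'
    (p := fun i => LinearMap.range (LinearMap.single A T i))
  · intro i
    exact IsSemisimpleModule.range _
  · rw [eq_top_iff]
    rintro v -
    rw [← Finset.univ_sum_single v]
    exact Submodule.sum_mem _ fun i _ =>
      Submodule.mem_iSup_of_mem i ⟨v i, rfl⟩

private lemma exists_smul_eq_of_comm {P : Type*} [AddCommGroup P] [Module A P]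
    [IsSemisimpleModule A P] (f : P →ₗ[A] P) (hf : ∀ g : P →ₗ[A] P, g ∘ₗ f = f ∘ₗ g) (x : P) :
    ∃ a : A, a • x = f x := by
  obtain ⟨N', hN'⟩ := exists_isCompl (Submodule.span A {x})
  set π : P →ₗ[A] P :=
    (Submodule.span A {x}).subtype ∘ₗ (Submodule.span A {x}).projectionOnto N' hN' with hπ
  have hx : π x = x := by
    simp only [hπ, LinearMap.comp_apply]
    erw [Submodule.projectionOnto_apply_left hN' ⟨x, Submodule.mem_span_singleton_self x⟩]
    rfl
  have hmem : f x ∈ Submodule.span A {x} := by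
    have h1 : π (f x) = f (π x) := congrFun (congrArg DFunLike.coe (hf π)) x
    rw [hx] at h1
    rw [← h1]
    exact Submodule.coe_mem _
  exact Submodule.mem_span_singleton.mp hmem


private lemma comm_pi {P : Type*} [AddCommGroup P] [Module A P] {J : Type*} [Fintype J]
    [DecidableEq J] (f : P →ₗ[A] P) (hf : ∀ g : P →ₗ[A] P, g ∘ₗ f = f ∘ₗ g)
    (G : (J → P) →ₗ[A] (J → P)) :
    G ∘ₗ (LinearMap.pi fun j => f ∘ₗ LinearMap.proj j) =
      (LinearMap.pi fun j => f ∘ₗ LinearMap.proj j) ∘ₗ G := by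
  set F : (J → P) →ₗ[A] (J → P) := LinearMap.pi fun j => f ∘ₗ LinearMap.proj j with hF
  have hFs : ∀ (j : J) (y : P), F (Pi.single j y) = Pi.single j (f y) := by
    intro j y
    funext i
    simp only [hF, LinearMap.pi_apply, LinearMap.comp_apply, LinearMap.proj_apply]
    rcases eq_or_ne i j with rfl | hij
    · simp
    · simp [Pi.single_eq_of_ne hij]
  refine LinearMap.ext fun v => ?_
  have hv : v = ∑ j, Pi.single j (v j) := (Finset.univ_sum_single v).symm
  set g : J → J → (P →ₗ[A] P) := fun i j => LinearMap.proj i ∘ₗ G ∘ₗ LinearMap.single A (fun _ : J => P) j with hg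
  have hcomp : ∀ (i j : J) (y : P), (G (Pi.single j y)) i = g i j y := fun _ _ _ => rfl
  funext i
  calc (G (F v)) i = (G (∑ j, Pi.single j (f (v j)))) i := by
        conv_lhs => rw [hv, map_sum]
        simp_rw [hFs]
      _ = ∑ j, g i j (f (v j)) := by rw [map_sum]; simp [hcomp]
      _ = ∑ j, f (g i j (v j)) := by
        refine Finset.sum_congr rfl fun j _ => ?_
        exact (congrFun (congrArg DFunLike.coe (hf (g i j))) (v j))
      _ = f (∑ j, g i j (v j)) := by rw [map_sum]
      _ = f ((G v) i) := by
        congr 1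
        conv_rhs => rw [hv, map_sum]
        simp [hcomp]
      _ = (F (G v)) i := rfl

private lemma density' {A : Type*} [Ring A] [Algebra ℂ A] (P : Type*) [AddCommGroup P]
    [Module ℂ P] [Module A P] [IsScalarTower ℂ A P] [FiniteDimensional ℂ P]
    [IsSemisimpleModule A P] (f : P →ₗ[A] P) (hf : ∀ g : P →ₗ[A] P, g ∘ₗ f = f ∘ₗ g) :
    ∃ a : A, ∀ x : P, a • x = f x := by
  classical
  set b := Module.finBasis ℂ P with hb
  set J := Fin (finrank ℂ P)
  haveI : IsSemisimpleModule A (J → P) := pi_isSemisimple _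
  obtain ⟨a, ha⟩ := exists_smul_eq_of_comm (LinearMap.pi fun j => f ∘ₗ LinearMap.proj j)
    (comm_pi f hf) (fun j => b j)
  refine ⟨a, ?_⟩
  have hbj : ∀ j : J, a • b j = f (b j) := by
    intro j
    have := congrFun ha j
    simpa using this
  have : DistribMulAction.toLinearMap ℂ P a = f.restrictScalars ℂ := by
    refine Module.Basis.ext b fun j => ?_
    exact hbj j
  intro x
  exact congrFun (congrArg DFunLike.coe this) x
private lemma exists_good_element {A : Type*} [Ring A] [Algebra ℂ A] {ι : Type*} [Fintype ι]
    [DecidableEq ι] (T : ι → Type*) [∀ i, AddCommGroup (T i)] [∀ i, Module ℂ (T i)]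
    [∀ i, Module A (T i)] [∀ i, IsScalarTower ℂ A (T i)] [∀ i, FiniteDimensional ℂ (T i)]
    [∀ i, IsSimpleModule A (T i)]
    (hpair : Pairwise fun i j => IsEmpty (T i ≃ₗ[A] T j)) (i₀ : ι) :
    ∃ a : A, (∀ x : T i₀, a • x = x) ∧ ∀ i, i ≠ i₀ → ∀ x : T i, a • x = 0 := by
  classical
  haveI : ∀ i, IsSemisimpleModule A (T i) := fun i => simple_isSemisimple (T i)
  haveI : IsSemisimpleModule A (∀ i, T i) := pi_isSemisimple T
  set f : (∀ i, T i) →ₗ[A] (∀ i, T i) :=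
    (LinearMap.single A T i₀) ∘ₗ (LinearMap.proj i₀) with hfdef
  have hfs : ∀ (j : ι) (x : T j), f (Pi.single j x) =
      if h : j = i₀ then Pi.single j x else 0 := by
    intro j x
    rcases eq_or_ne j i₀ with rfl | hj
    · simp [hfdef]
    · simp [hfdef, Pi.single_eq_of_ne (Ne.symm hj), hj]
  have hf : ∀ g : (∀ i, T i) →ₗ[A] (∀ i, T i), g ∘ₗ f = f ∘ₗ g := by
    intro g
    set gm : ∀ i j : ι, (T j →ₗ[A] T i) :=
      fun i j => LinearMap.proj i ∘ₗ g ∘ₗ LinearMap.single A T j with hgm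
    have hzero : ∀ i j, i ≠ j → gm i j = 0 := by
      intro i j hij
      by_contra hne
      have hbij : Function.Bijective (gm i j) := bijective_of_ne_zero hne
      exact (hpair (Ne.symm hij)).false (LinearEquiv.ofBijective _ hbij)
    have hgs : ∀ (j : ι) (x : T j), g (Pi.single j x) = Pi.single j (gm j j x) := by
      intro j x
      funext i
      rcases eq_or_ne i j with rfl | hij
      · simp only [Pi.single_eq_same]; rfl
      · have : (g (Pi.single j x)) i = gm i j x := rfl
        rw [this, hzero i j hij, Pi.single_eq_of_ne hij]
        rfl
    refine LinearMap.ext fun v => ?_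
    have hv : v = ∑ j, Pi.single j (v j) := (Finset.univ_sum_single v).symm
    conv_lhs => rw [hv]
    conv_rhs => rw [hv]
    simp only [LinearMap.comp_apply, map_sum]
    refine Finset.sum_congr rfl fun j _ => ?_
    rw [hfs, hgs]
    rcases eq_or_ne j i₀ with rfl | hj
    · rw [dif_pos rfl, hgs, hfs, dif_pos rfl]
    · rw [dif_neg hj, hfs, dif_neg hj, map_zero]
  obtain ⟨a, ha⟩ := density' (∀ i, T i) f hf
  refine ⟨a, ?_, ?_⟩
  · intro x
    have h1 := congrFun (ha (Pi.single i₀ x)) i₀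
    rw [hfs, dif_pos rfl] at h1
    simpa using h1
  · intro i hi x
    have h1 := congrFun (ha (Pi.single i x)) i
    rw [hfs, dif_neg hi] at h1
    simpa using h1
end Density

private lemma trace_eq_card_mul {A : Type*} [Ring A] [Algebra ℂ A] {M : Type*} [AddCommGroup M]
    [Module ℂ M] [Module A M] [IsScalarTower ℂ A M] [FiniteDimensional ℂ M] {ι : Type*}
    [Fintype ι] [DecidableEq ι] (S : ι → Submodule A M)
    (hint : DirectSum.IsInternal fun i => (S i).restrictScalars ℂ)
    (a : A) (p : ι → Prop) [DecidablePred p]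
    (h1 : ∀ i, p i → ∀ x ∈ S i, a • x = x) (h0 : ∀ i, ¬ p i → ∀ x ∈ S i, a • x = 0)
    (d : ℕ) (hd : ∀ i, p i → finrank ℂ ((S i).restrictScalars ℂ) = d) :
    trace ℂ M (DistribMulAction.toLinearMap ℂ M a) =
      ((Fintype.card {i // p i}) * d : ℕ) := by
  have hmap : ∀ i, Set.MapsTo (DistribMulAction.toLinearMap ℂ M a)
      ((S i).restrictScalars ℂ) ((S i).restrictScalars ℂ) :=
    fun i x hx => (S i).smul_mem a hx
  rw [LinearMap.trace_eq_sum_trace_restrict hint hmap]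
  have hterm : ∀ i, trace ℂ ((S i).restrictScalars ℂ)
      ((DistribMulAction.toLinearMap ℂ M a).restrict (hmap i)) =
      if p i then (d : ℂ) else 0 := by
    intro i
    rcases Classical.em (p i) with hp | hp
    · rw [if_pos hp]
      have : (DistribMulAction.toLinearMap ℂ M a).restrict (hmap i) = LinearMap.id := by
        refine LinearMap.ext fun x => Subtype.ext ?_
        exact h1 i hp x.1 x.2
      rw [this, LinearMap.trace_id, hd i hp]
    · rw [if_neg hp]
      have : (DistribMulAction.toLinearMap ℂ M a).restrict (hmap i) = 0 := by
        refine LinearMap.ext fun x => Subtype.ext ?_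
        exact h0 i hp x.1 x.2
      rw [this]
      exact LinearMap.map_zero _
  rw [Finset.sum_congr rfl fun i _ => hterm i]
  rw [Finset.sum_ite, Finset.sum_const, Finset.sum_const_zero, add_zero, nsmul_eq_mul,
    Fintype.card_subtype]
  push_cast
  ring

section Core
variable {A : Type*} [Ring A] [Algebra ℂ A]

private lemma smul_id_of_equiv {M₁ M₂ : Type*} [AddCommGroup M₁] [Module A M₁]
    [AddCommGroup M₂] [Module A M₂] (e : M₁ ≃ₗ[A] M₂) {a : A}
    (h : ∀ x : M₁, a • x = x) (y : M₂) : a • y = y := by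
  conv_lhs => rw [← e.apply_symm_apply y, ← map_smul, h]
  rw [e.apply_symm_apply]

private lemma smul_zero_of_equiv {M₁ M₂ : Type*} [AddCommGroup M₁] [Module A M₁]
    [AddCommGroup M₂] [Module A M₂] (e : M₁ ≃ₗ[A] M₂) {a : A}
    (h : ∀ x : M₁, a • x = 0) (y : M₂) : a • y = 0 := by
  rw [← e.apply_symm_apply y, ← map_smul, h, map_zero]

private lemma exists_decomp (M : Type*) [AddCommGroup M] [Module ℂ M] [Module A M]
    [IsScalarTower ℂ A M] [FiniteDimensional ℂ M] [IsSemisimpleModule A M] :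
    ∃ s : Set (Submodule A M), s.Finite ∧ sSupIndep s ∧ sSup s = ⊤ ∧
      ∀ m ∈ s, IsSimpleModule A m := by
  haveI : Module.Finite A M := Module.Finite.of_restrictScalars_finite ℂ A M
  exact (IsSemisimpleModule.finite_tfae.out 0 4).mp ‹Module.Finite A M›

private theorem iso_of_trace_eq (M N : Type*) [AddCommGroup M] [Module ℂ M] [Module A M]
    [IsScalarTower ℂ A M] [FiniteDimensional ℂ M] [AddCommGroup N] [Module ℂ N] [Module A N]
    [IsScalarTower ℂ A N] [FiniteDimensional ℂ N] [IsSemisimpleModule A M]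
    [IsSemisimpleModule A N]
    (h : ∀ a : A, trace ℂ M (DistribMulAction.toLinearMap ℂ M a)
        = trace ℂ N (DistribMulAction.toLinearMap ℂ N a)) :
    Nonempty (M ≃ₗ[A] N) := by
  classical
  obtain ⟨sM, hMfin, hMind, hMsup, hMsimple⟩ := exists_decomp (A := A) M
  obtain ⟨sN, hNfin, hNind, hNsup, hNsimple⟩ := exists_decomp (A := A) N
  haveI := hMfin.fintype
  haveI := hNfin.fintype
  set SM : sM → Submodule A M := fun i => (i : Submodule A M) with hSM
  set SN : sN → Submodule A N := fun j => (j : Submodule A N) with hSN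
  have hMint : DirectSum.IsInternal SM := by
    rw [DirectSum.isInternal_submodule_iff_iSupIndep_and_iSup_eq_top]
    exact ⟨(sSupIndep_iff sM).mp hMind, by rw [← sSup_eq_iSup']; exact hMsup⟩
  have hNint : DirectSum.IsInternal SN := by
    rw [DirectSum.isInternal_submodule_iff_iSupIndep_and_iSup_eq_top]
    exact ⟨(sSupIndep_iff sN).mp hNind, by rw [← sSup_eq_iSup']; exact hNsup⟩
  haveI hMsimp : ∀ i : sM, IsSimpleModule A (SM i) := fun i => hMsimple i i.2
  haveI hNsimp : ∀ j : sN, IsSimpleModule A (SN j) := fun j => hNsimple j j.2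
  -- combined family of simple submodules of M × N
  set WC : sM ⊕ sN → Submodule A (M × N) :=
    Sum.elim (fun i => (SM i).map (LinearMap.inl A M N))
      (fun j => (SN j).map (LinearMap.inr A M N)) with hWC
  have eMW : ∀ i : sM, (SM i) ≃ₗ[A] WC (Sum.inl i) :=
    fun i => Submodule.equivMapOfInjective _ LinearMap.inl_injective _
  have eNW : ∀ j : sN, (SN j) ≃ₗ[A] WC (Sum.inr j) :=
    fun j => Submodule.equivMapOfInjective _ LinearMap.inr_injective _
  haveI hWsimp : ∀ c, IsSimpleModule A (WC c) := by
    rintro (i | j)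
    · exact IsSimpleModule.congr (eMW i).symm
    · exact IsSimpleModule.congr (eNW j).symm
  haveI hWfd : ∀ c, FiniteDimensional ℂ (WC c) := fun c =>
    inferInstanceAs (FiniteDimensional ℂ ((WC c).restrictScalars ℂ))
  -- the setoid of isomorphism classes
  letI sd : Setoid (sM ⊕ sN) :=
    ⟨fun c c' => Nonempty ((WC c) ≃ₗ[A] (WC c')),
      fun c => ⟨LinearEquiv.refl A _⟩,
      fun ⟨e⟩ => ⟨e.symm⟩,
      fun ⟨e⟩ ⟨e'⟩ => ⟨e.trans e'⟩⟩
  haveI : Finite (Quotient sd) := Quotient.finite _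
  haveI : Fintype (Quotient sd) := Fintype.ofFinite _
  set φ : sM → Quotient sd := fun i => ⟦Sum.inl i⟧ with hφ
  set ψ : sN → Quotient sd := fun j => ⟦Sum.inr j⟧ with hψ
  -- the representative simple modules
  set T : Quotient sd → Type _ := fun q => (WC q.out : Type _) with hT
  haveI hTsimp : ∀ q, IsSimpleModule A (T q) := fun q => hWsimp _
  haveI hTfd : ∀ q, FiniteDimensional ℂ (T q) := fun q => hWfd _
  have hpair : Pairwise fun q q' => IsEmpty (T q ≃ₗ[A] T q') := by
    intro q q' hne
    constructor
    intro e
    exact hne (by rw [← Quotient.out_eq q, ← Quotient.out_eq q']; exact Quotient.sound ⟨e⟩)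
  -- per-class multiplicity equality
  have key : ∀ q₀ : Quotient sd,
      Fintype.card {i : sM // φ i = q₀} = Fintype.card {j : sN // ψ j = q₀} := by
    intro q₀
    obtain ⟨a, ha1, ha0⟩ := exists_good_element (A := A) T hpair q₀
    -- transfer action to each member of the family
    have hC1 : ∀ c, ⟦c⟧ = q₀ → ∀ x : (WC c), a • x = x := by
      intro c hc x
      have hrel : sd (⟦c⟧ : Quotient sd).out c := Quotient.mk_out c
      obtain ⟨e⟩ := hrel
      rw [hc] at e
      exact smul_id_of_equiv e ha1 x
    have hC0 : ∀ c, ⟦c⟧ ≠ q₀ → ∀ x : (WC c), a • x = 0 := by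
      intro c hc x
      have hrel : sd (⟦c⟧ : Quotient sd).out c := Quotient.mk_out c
      obtain ⟨e⟩ := hrel
      exact smul_zero_of_equiv e (ha0 ⟦c⟧ hc) x
    -- transfer to the original submodules
    have hM1 : ∀ i : sM, φ i = q₀ → ∀ x ∈ SM i, a • x = x := by
      intro i hi x hx
      have := smul_id_of_equiv (eMW i).symm (hC1 (Sum.inl i) hi) ⟨x, hx⟩
      exact congrArg Subtype.val this
    have hM0 : ∀ i : sM, ¬ φ i = q₀ → ∀ x ∈ SM i, a • x = 0 := by
      intro i hi x hx
      have := smul_zero_of_equiv (eMW i).symm (hC0 (Sum.inl i) hi) ⟨x, hx⟩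
      exact congrArg Subtype.val this
    have hN1 : ∀ j : sN, ψ j = q₀ → ∀ x ∈ SN j, a • x = x := by
      intro j hj x hx
      have := smul_id_of_equiv (eNW j).symm (hC1 (Sum.inr j) hj) ⟨x, hx⟩
      exact congrArg Subtype.val this
    have hN0 : ∀ j : sN, ¬ ψ j = q₀ → ∀ x ∈ SN j, a • x = 0 := by
      intro j hj x hx
      have := smul_zero_of_equiv (eNW j).symm (hC0 (Sum.inr j) hj) ⟨x, hx⟩
      exact congrArg Subtype.val this
    -- dimension of the representative
    set d : ℕ := finrank ℂ (T q₀) with hd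
    have hdM : ∀ i : sM, φ i = q₀ → finrank ℂ ((SM i).restrictScalars ℂ) = d := by
      intro i hi
      have hrel : sd (⟦Sum.inl i⟧ : Quotient sd).out (Sum.inl i) := Quotient.mk_out _
      obtain ⟨e⟩ := hrel
      have hi' : (⟦Sum.inl i⟧ : Quotient sd) = q₀ := hi
      rw [hi'] at e
      have e2 : ((SM i).restrictScalars ℂ) ≃ₗ[A] T q₀ :=
        (Submodule.restrictScalarsEquiv ℂ A M (SM i)).trans ((eMW i).trans e.symm)
      exact (e2.restrictScalars ℂ).finrank_eq
    have hdN : ∀ j : sN, ψ j = q₀ → finrank ℂ ((SN j).restrictScalars ℂ) = d := by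
      intro j hj
      have hrel : sd (⟦Sum.inr j⟧ : Quotient sd).out (Sum.inr j) := Quotient.mk_out _
      obtain ⟨e⟩ := hrel
      have hj' : (⟦Sum.inr j⟧ : Quotient sd) = q₀ := hj
      rw [hj'] at e
      have e2 : ((SN j).restrictScalars ℂ) ≃ₗ[A] T q₀ :=
        (Submodule.restrictScalarsEquiv ℂ A N (SN j)).trans ((eNW j).trans e.symm)
      exact (e2.restrictScalars ℂ).finrank_eq
    have tM := trace_eq_card_mul SM hMint a (fun i => φ i = q₀) hM1 hM0 d hdM
    have tN := trace_eq_card_mul SN hNint a (fun j => ψ j = q₀) hN1 hN0 d hdN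
    have hdpos : 0 < d := by
      haveI : Nontrivial (T q₀) := IsSimpleModule.nontrivial A _
      exact finrank_pos
    have : ((Fintype.card {i : sM // φ i = q₀} * d : ℕ) : ℂ)
        = ((Fintype.card {j : sN // ψ j = q₀} * d : ℕ) : ℂ) := by
      rw [← tM, ← tN]; exact h a
    have h2 : Fintype.card {i : sM // φ i = q₀} * d = Fintype.card {j : sN // ψ j = q₀} * d :=
      Nat.cast_injective (R := ℂ) this
    exact Nat.eq_of_mul_eq_mul_right hdpos h2
  -- build the bijection matching isomorphism classes
  set eFib : ∀ q₀, {i : sM // φ i = q₀} ≃ {j : sN // ψ j = q₀} :=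
    fun q₀ => Fintype.equivOfCardEq (key q₀) with heFib
  set eIdx : sM ≃ sN := Equiv.ofFiberEquiv eFib with heIdx
  have heq : ∀ i : sM, ψ (eIdx i) = φ i := fun i => Equiv.ofFiberEquiv_map eFib i
  have eComp : ∀ i : sM, Nonempty ((SM i) ≃ₗ[A] (SN (eIdx i))) := by
    intro i
    have : sd (Sum.inl i) (Sum.inr (eIdx i)) := Quotient.exact (by
      show φ i = ψ (eIdx i)
      rw [heq i])
    obtain ⟨e⟩ := this
    exact ⟨(eMW i).trans (e.trans (eNW (eIdx i)).symm)⟩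
  -- assemble
  let eC : ∀ i : sM, (SM i) ≃ₗ[A] (SN (eIdx i)) := fun i => (eComp i).some
  have step3 : (⨁ i : sM, ↥(SN (eIdx i))) ≃ₗ[A] (⨁ j : sN, ↥(SN j)) :=
    (DirectSum.lequivCongrLeft (R := A) (M := fun j : sN => ↥(SN j)) eIdx.symm).symm
  exact ⟨(LinearEquiv.ofBijective (DirectSum.coeLinearMap SM) hMint).symm.trans
    ((DFinsupp.mapRange.linearEquiv eC).trans (step3.trans
      (LinearEquiv.ofBijective (DirectSum.coeLinearMap SN) hNint)))⟩
end Core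

theorem iso_of_character_eq (G : Type) [Monoid G] (V W : FDRep ℂ G)
    (hV : IsSemisimpleModule (MonoidAlgebra ℂ G) (Representation.asModule V.ρ))
    (hW : IsSemisimpleModule (MonoidAlgebra ℂ G) (Representation.asModule W.ρ))
    (h : ∀ g : G, V.character g = W.character g) :
    Nonempty (V ≅ W) := by
  classical
  set A := MonoidAlgebra ℂ G with hA
  set ρV : Representation ℂ G V := V.ρ with hρV
  set ρW : Representation ℂ G W := W.ρ with hρW
  letI instMV : Module A V := Module.compHom _ (ρV.asAlgebraHom).toRingHom
  letI instMW : Module A W := Module.compHom _ (ρW.asAlgebraHom).toRingHom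
  have hsmulV : ∀ (r : A) (x : V), r • x = ρV.asAlgebraHom r x := fun r x => rfl
  have hsmulW : ∀ (r : A) (x : W), r • x = ρW.asAlgebraHom r x := fun r x => rfl
  haveI towV : IsScalarTower ℂ A V := by
    constructor
    intro c r x
    rw [hsmulV, hsmulV, map_smul]
    exact LinearMap.smul_apply _ _ _
  haveI towW : IsScalarTower ℂ A W := by
    constructor
    intro c r x
    rw [hsmulW, hsmulW, map_smul]
    exact LinearMap.smul_apply _ _ _
  haveI hssV : IsSemisimpleModule A V := hV
  haveI hssW : IsSemisimpleModule A W := hW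
  -- character equality extends to the monoid algebra
  have htr : ∀ a : A, trace ℂ V (DistribMulAction.toLinearMap ℂ (V : Type) a)
      = trace ℂ W (DistribMulAction.toLinearMap ℂ (W : Type) a) := by
    have key : ∀ a : A, trace ℂ (V : Type) (ρV.asAlgebraHom a)
        = trace ℂ (W : Type) (ρW.asAlgebraHom a) := by
      intro a
      induction a using MonoidAlgebra.induction_on with
      | of g =>
          rw [MonoidAlgebra.of_apply,
            Representation.asAlgebraHom_single, Representation.asAlgebraHom_single,
            one_smul, one_smul]
          exact h g
      | add a b ha hb => rw [map_add, map_add, map_add, map_add, ha, hb]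
      | smul c a ha => rw [map_smul, map_smul, map_smul, map_smul, ha]
    intro a
    have hV' : DistribMulAction.toLinearMap ℂ (V : Type) a = ρV.asAlgebraHom a :=
      LinearMap.ext fun x => rfl
    have hW' : DistribMulAction.toLinearMap ℂ (W : Type) a = ρW.asAlgebraHom a :=
      LinearMap.ext fun x => rfl
    rw [hV', hW']
    exact key a
  obtain ⟨E⟩ := iso_of_trace_eq (A := A) (V : Type) (W : Type) htr
  -- build the isomorphism in FDRep
  let F : (V : Type) ≃ₗ[ℂ] (W : Type) := E.restrictScalars ℂ
  have hcomm : ∀ (g : G) (x : V), F (ρV g x) = ρW g (F x) := by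
    intro g x
    have h1 : ρV g x = (MonoidAlgebra.of ℂ G g) • x := by
      rw [hsmulV, MonoidAlgebra.of_apply, Representation.asAlgebraHom_single, one_smul]
    have h2 : ∀ y : W, ρW g y = (MonoidAlgebra.of ℂ G g) • y := fun y => by
      rw [hsmulW, MonoidAlgebra.of_apply, Representation.asAlgebraHom_single, one_smul]
    rw [h1, h2]
    exact E.map_smul _ x
  exact ⟨Action.mkIso F.toFGModuleCatIso (fun g => by
    ext x
    exact hcomm g x)⟩
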